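/- For every n ≥ 5, h_{2n}² - h_{2n-1}² + h_{2n-1}·h_{2n+1} - h_{2n-2}·h_{2n} = 0. -/
import Mathlib


def t (n : ℕ) : ℤ := (-1) ^ ((Nat.digits 2 n).sum)

def h : ℕ → ℤ
  | 0 => 0
  | 1 => 1
  | (n + 2) => t (n + 2) * h (n + 1) + h n

lemma t_odd (n : ℕ) (hn : 1 ≤ n) : t (2 * n + 1) = - t (2 * n) := by
  have h1 : Nat.digits 2 (2 * n + 1) = 1 :: Nat.digits 2 n := by
    rw [Nat.digits_def' (by norm_num) (by omega)]
    congr 1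
    · omega
    · congr 1; omega
  have h2 : Nat.digits 2 (2 * n) = 0 :: Nat.digits 2 n := by
    rw [Nat.digits_def' (by norm_num) (by omega)]
    congr 1
    · omega
    · congr 1; omega
  unfold t
  rw [h1, h2, List.sum_cons, List.sum_cons]
  ring

theorem stmt18 : ∀ n : ℕ, 5 ≤ n →
    h (2 * n) ^ 2 - h (2 * n - 1) ^ 2 + h (2 * n - 1) * h (2 * n + 1) -
      h (2 * n - 2) * h (2 * n) = 0 := by
  intro n hn
  obtain ⟨m, rfl⟩ : ∃ m, n = m + 5 := ⟨n - 5, by omega⟩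
  have e1 : 2 * (m + 5) = (2 * m + 8) + 2 := by ring
  have e2 : 2 * (m + 5) - 1 = 2 * m + 9 := by omega
  have e3 : 2 * (m + 5) - 2 = 2 * m + 8 := by omega
  have e4 : 2 * (m + 5) + 1 = (2 * m + 9) + 2 := by ring
  rw [e2, e3, e4, e1]
  have hc : h (2 * m + 8 + 2) = t (2 * m + 8 + 2) * h (2 * m + 9) + h (2 * m + 8) := rfl
  have hd : h (2 * m + 9 + 2) = t (2 * m + 9 + 2) * h (2 * m + 8 + 2) + h (2 * m + 9) := rfl
  have ht : t (2 * m + 9 + 2) = - t (2 * m + 8 + 2) := by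
    have := t_odd (m + 5) (by omega)
    rw [show 2 * (m + 5) + 1 = 2 * m + 9 + 2 from by ring,
        show 2 * (m + 5) = 2 * m + 8 + 2 from by ring] at this
    exact this
  rw [hd, hc, ht]
  ring
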